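/- arXiv:2201.09257 — 2 statements merged into one kernel-verified Lean document; each statement's English description precedes it below -/
import Mathlib

section
/- Call a linear map Γ : M_{d_A}(ℂ) → M_{d_B}(ℂ) a PPT-binding subchannel if it is completely positive, trace non-increasing (Tr Γ(ρ) ≤ 1 for every state ρ), and (id_k ⊗ Γ)(X) is PPT for every positive semidefinite X and every k ∈ ℕ. Then for every channel Λ : M_{d_A}(ℂ) → M_{d_B}(ℂ), the channel robustness computed over subchannels equals that computed over channels: inf{λ ≥ 0 : there exist PPT-binding subchannels Γ, Θ with Λ + λΓ = (1+λ)Θ} = R_KE(Λ). -/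
open Matrix
open scoped ComplexOrder

section Defs

variable {ιA ιB : Type*}

/-- Partial transpose on the second tensor factor. -/
def ptranspose (M : Matrix (ιA × ιB) (ιA × ιB) ℂ) : Matrix (ιA × ιB) (ιA × ιB) ℂ :=
  Matrix.of fun p q => M (p.1, q.2) (q.1, p.2)

/-- PPT matrix: both it and its partial transpose are positive semidefinite. -/
def IsPPT [Fintype ιA] [Fintype ιB] (M : Matrix (ιA × ιB) (ιA × ιB) ℂ) : Prop :=
  M.PosSemidef ∧ (ptranspose M).PosSemidef

/-- A quantum state: positive semidefinite with trace one. -/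
def IsState {ι : Type*} [Fintype ι] (ρ : Matrix ι ι ℂ) : Prop :=
  ρ.PosSemidef ∧ ρ.trace = 1

/-- The map `id_R ⊗ Φ` acting on matrices over a product index. -/
def idTensor (ιR : Type*) (Φ : Matrix ιA ιA ℂ →ₗ[ℂ] Matrix ιB ιB ℂ) :
    Matrix (ιR × ιA) (ιR × ιA) ℂ →ₗ[ℂ] Matrix (ιR × ιB) (ιR × ιB) ℂ where
  toFun M := Matrix.of fun p q => Φ (Matrix.of fun a b => M (p.1, a) (q.1, b)) p.2 q.2
  map_add' M N := by
    funext p q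
    show Φ ((Matrix.of fun a b => M (p.1, a) (q.1, b)) + (Matrix.of fun a b => N (p.1, a) (q.1, b))) p.2 q.2 = _
    rw [map_add]
    rfl
  map_smul' c M := by
    funext p q
    show Φ (c • (Matrix.of fun a b => M (p.1, a) (q.1, b))) p.2 q.2 = _
    rw [_root_.map_smul]
    rfl

/-- Complete positivity. -/
def IsCP [Fintype ιA] [Fintype ιB] (Φ : Matrix ιA ιA ℂ →ₗ[ℂ] Matrix ιB ιB ℂ) : Prop :=
  ∀ (k : ℕ) (X : Matrix (Fin k × ιA) (Fin k × ιA) ℂ), X.PosSemidef →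
    ((idTensor (Fin k) Φ) X).PosSemidef

/-- Trace preservation. -/
def IsTP [Fintype ιA] [Fintype ιB] (Φ : Matrix ιA ιA ℂ →ₗ[ℂ] Matrix ιB ιB ℂ) : Prop :=
  ∀ X : Matrix ιA ιA ℂ, (Φ X).trace = X.trace

/-- A quantum channel: completely positive and trace preserving. -/
def IsChannel [Fintype ιA] [Fintype ιB] (Φ : Matrix ιA ιA ℂ →ₗ[ℂ] Matrix ιB ιB ℂ) : Prop :=
  IsCP Φ ∧ IsTP Φ

/-- A map is PPT-binding if `id_k ⊗ Φ` sends positive semidefinite matrices to PPT matrices. -/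
def PPTBinding [Fintype ιA] [Fintype ιB] (Φ : Matrix ιA ιA ℂ →ₗ[ℂ] Matrix ιB ιB ℂ) : Prop :=
  ∀ (k : ℕ) (X : Matrix (Fin k × ιA) (Fin k × ιA) ℂ), X.PosSemidef →
    IsPPT ((idTensor (Fin k) Φ) X)

/-- A PPT-binding channel. -/
def PPTBindingChannel [Fintype ιA] [Fintype ιB] (Φ : Matrix ιA ιA ℂ →ₗ[ℂ] Matrix ιB ιB ℂ) : Prop :=
  IsChannel Φ ∧ PPTBinding Φ

/-- The channel robustness with respect to PPT-binding channels. -/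
noncomputable def RKE [Fintype ιA] [Fintype ιB] (Λ : Matrix ιA ιA ℂ →ₗ[ℂ] Matrix ιB ιB ℂ) : ℝ :=
  sInf {l : ℝ | 0 ≤ l ∧ ∃ Γ Θ : Matrix ιA ιA ℂ →ₗ[ℂ] Matrix ιB ιB ℂ,
    PPTBindingChannel Γ ∧ PPTBindingChannel Θ ∧ Λ + (l : ℂ) • Γ = ((1 + l : ℝ) : ℂ) • Θ}

/-- The PPT robustness of a state. -/
noncomputable def RPPT [Fintype ιA] [Fintype ιB] (ρ : Matrix (ιA × ιB) (ιA × ιB) ℂ) : ℝ :=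
  sInf {t : ℝ | ∃ δ : Matrix (ιA × ιB) (ιA × ιB) ℂ, IsPPT δ ∧ IsPPT (ρ + δ) ∧ (δ.trace).re = t}

/-- Operator norm of a matrix. -/
noncomputable def opNorm {ι : Type*} [Fintype ι] [DecidableEq ι] (M : Matrix ι ι ℂ) : ℝ :=
  ‖Matrix.toEuclideanCLM (𝕜 := ℂ) (n := ι) M‖

/-- Trace norm of a matrix. -/
noncomputable def traceNorm {ι : Type*} [Fintype ι] [DecidableEq ι] (M : Matrix ι ι ℂ) : ℝ :=
  (((Matrix.posSemidef_conjTranspose_mul_self M).1.eigenvectorUnitary.1 *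
      diagonal (((↑) : ℝ → ℂ) ∘ (√·) ∘ (Matrix.posSemidef_conjTranspose_mul_self M).1.eigenvalues) *
      (star (Matrix.posSemidef_conjTranspose_mul_self M).1.eigenvectorUnitary : Matrix ι ι ℂ)).trace).re

end Defs

/-- A PPT-binding subchannel: completely positive, trace non-increasing, and PPT-binding. -/
def PPTBindingSubchannel {ιA ιB : Type*} [Fintype ιA] [Fintype ιB]
    (Γ : Matrix ιA ιA ℂ →ₗ[ℂ] Matrix ιB ιB ℂ) : Prop :=
  IsCP Γ ∧ (∀ ρ : Matrix ιA ιA ℂ, IsState ρ → ((Γ ρ).trace).re ≤ 1) ∧ PPTBinding Γ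


section Aux
open Complex

theorem trace_nonneg_psd {n : Type*} [Fintype n] [DecidableEq n] {A : Matrix n n ℂ}
    (hA : A.PosSemidef) : 0 ≤ A.trace := by
  exact hA.trace_nonneg

theorem trace_real_psd {n : Type*} [Fintype n] [DecidableEq n] {A : Matrix n n ℂ}
    (hA : A.PosSemidef) : A.trace = ((A.trace.re : ℝ) : ℂ) ∧ 0 ≤ A.trace.re := by
  have h := trace_nonneg_psd hA
  rw [Complex.le_def] at h
  exact ⟨Complex.ext rfl (by simp [← h.2]), by simpa using h.1⟩

theorem eq_zero_of_trace_psd {n : Type*} [Fintype n] [DecidableEq n] {A : Matrix n n ℂ}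
    (hA : A.PosSemidef) (h : A.trace = 0) : A = 0 := by
  exact hA.trace_eq_zero_iff.mp h

theorem psd_smul_real {n : Type*} [Fintype n] {A : Matrix n n ℂ} (hA : A.PosSemidef)
    {c : ℝ} (hc : 0 ≤ c) : ((c : ℂ) • A).PosSemidef := by
  refine Matrix.PosSemidef.of_dotProduct_mulVec_nonneg ?_ ?_
  · rw [Matrix.IsHermitian, Matrix.conjTranspose_smul, hA.1, Complex.star_def,
      Complex.conj_ofReal]
  · intro x
    rw [Matrix.smul_mulVec, dotProduct_smul]
    exact smul_nonneg (by exact_mod_cast hc) (hA.dotProduct_mulVec_nonneg x)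

/-- positivity at level 1 from complete positivity -/
theorem psd_of_cp {ιA ιB : Type*} [Fintype ιA] [Fintype ιB]
    {Φ : Matrix ιA ιA ℂ →ₗ[ℂ] Matrix ιB ιB ℂ} (hCP : IsCP Φ)
    {Y : Matrix ιA ιA ℂ} (hY : Y.PosSemidef) : (Φ Y).PosSemidef := by
  have h1 : (Y.submatrix (Prod.snd : Fin 1 × ιA → ιA) Prod.snd).PosSemidef :=
    hY.submatrix _
  have h3 := (hCP 1 _ h1).submatrix (fun i : ιB => ((0 : Fin 1), i))
  have h4 : ((idTensor (Fin 1) Φ) (Y.submatrix (Prod.snd : Fin 1 × ιA → ιA) Prod.snd)).submatrix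
      (fun i : ιB => ((0 : Fin 1), i)) (fun i : ιB => ((0 : Fin 1), i)) = Φ Y := rfl
  rwa [h4] at h3

/-- trace monotonicity for subchannels on PSD matrices -/
theorem trace_mono_sub {ιA ιB : Type*} [Fintype ιA] [Fintype ιB] [DecidableEq ιA] [DecidableEq ιB]
    {Γ : Matrix ιA ιA ℂ →ₗ[ℂ] Matrix ιB ιB ℂ} (hCP : IsCP Γ)
    (hTr : ∀ ρ : Matrix ιA ιA ℂ, IsState ρ → ((Γ ρ).trace).re ≤ 1)
    {Y : Matrix ιA ιA ℂ} (hY : Y.PosSemidef) : 0 ≤ Y.trace - (Γ Y).trace := by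
  have hGY := psd_of_cp hCP hY
  obtain ⟨hYr, hYnn⟩ := trace_real_psd hY
  obtain ⟨hGr, hGnn⟩ := trace_real_psd hGY
  rcases eq_or_lt_of_le hYnn with h0 | hpos
  · have hY0 : Y.trace = 0 := by rw [hYr, ← h0]; simp
    have hY' : Y = 0 := eq_zero_of_trace_psd hY hY0
    rw [hY', map_zero, Matrix.trace_zero, Matrix.trace_zero, sub_zero]
  · set c : ℝ := Y.trace.re with hc
    have hρ : IsState (((c⁻¹ : ℝ) : ℂ) • Y) := by
      constructor
      · exact psd_smul_real hY (inv_nonneg.mpr hYnn)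
      · rw [Matrix.trace_smul, smul_eq_mul, hYr, ← Complex.ofReal_mul,
          inv_mul_cancel₀ (ne_of_gt hpos), Complex.ofReal_one]
    have h1 := hTr _ hρ
    rw [_root_.map_smul, Matrix.trace_smul, smul_eq_mul, Complex.re_ofReal_mul] at h1
    have h2 : (Γ Y).trace.re ≤ c := by
      have := (inv_mul_le_iff₀ hpos).mp h1
      simpa [mul_one] using this
    rw [Complex.le_def]
    constructor
    · simp only [Complex.sub_re, Complex.zero_re]
      linarith
    · rw [hYr, hGr]; simp

end Aux

section Aux2
variable {ιA ιB : Type*} [Fintype ιA] [Fintype ιB] [DecidableEq ιA] [DecidableEq ιB]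

/-- the "trace deficit" block matrix is PSD -/
theorem deficit_psd {Γ : Matrix ιA ιA ℂ →ₗ[ℂ] Matrix ιB ιB ℂ} (hCP : IsCP Γ)
    (hTr : ∀ ρ : Matrix ιA ιA ℂ, IsState ρ → ((Γ ρ).trace).re ≤ 1)
    (k : ℕ) {X : Matrix (Fin k × ιA) (Fin k × ιA) ℂ} (hX : X.PosSemidef) :
    (Matrix.of fun p q : Fin k =>
      (Matrix.of fun a b => X (p, a) (q, b)).trace
        - (Γ (Matrix.of fun a b => X (p, a) (q, b))).trace).PosSemidef := by
  have hXT := hCP k X hX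
  refine Matrix.PosSemidef.of_dotProduct_mulVec_nonneg ?_ ?_
  · -- Hermitian
    ext p q
    simp only [Matrix.conjTranspose_apply, Matrix.of_apply, star_sub]
    congr 1
    · rw [Matrix.trace, Matrix.trace, star_sum]
      refine Finset.sum_congr rfl fun a _ => ?_
      simp only [Matrix.diag_apply, Matrix.of_apply]
      exact hX.1.apply _ _
    · have h1 : ∀ r s : Fin k, (Γ (Matrix.of fun a b => X (r, a) (s, b))).trace
          = ∑ b : ιB, ((idTensor (Fin k) Γ) X) (r, b) (s, b) := fun r s => rfl
      rw [h1, h1, star_sum]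
      refine Finset.sum_congr rfl fun b _ => ?_
      exact hXT.1.apply _ _
  · -- quadratic form
    intro x
    set A : Matrix (Fin k × ιA) ιA ℂ :=
      Matrix.of fun (pc : Fin k × ιA) (b : ιA) => x pc.1 * (1 : Matrix ιA ιA ℂ) pc.2 b with hA
    set Y : Matrix ιA ιA ℂ :=
      ∑ p : Fin k, ∑ q : Fin k, (star (x p) * x q) • (Matrix.of fun a b => X (p, a) (q, b))
      with hYdef
    have hYapp : ∀ a b, Y a b = ∑ p : Fin k, ∑ q : Fin k,
        (star (x p) * x q) * X (p, a) (q, b) := by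
      intro a b
      simp [hYdef, Matrix.sum_apply]
    have hYeq : Y = Aᴴ * X * A := by
      ext a b
      rw [hYapp]
      simp only [Matrix.mul_apply, Matrix.conjTranspose_apply, hA, Matrix.of_apply,
        Fintype.sum_prod_type, Matrix.one_apply, mul_ite, mul_one, mul_zero, ite_mul,
        zero_mul, star_mul', apply_ite (star : ℂ → ℂ), star_one, star_zero, Finset.sum_ite_eq',
        Finset.mem_univ, if_true, Finset.sum_ite_eq, Finset.sum_mul, Finset.mul_sum]
      rw [Finset.sum_comm]
      refine Finset.sum_congr rfl fun p _ => Finset.sum_congr rfl fun q _ => ?_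
      ring
    have hYpsd : Y.PosSemidef := hYeq ▸ hX.conjTranspose_mul_mul_same A
    have hform : star x ⬝ᵥ (Matrix.of fun p q : Fin k =>
        (Matrix.of fun a b => X (p, a) (q, b)).trace
          - (Γ (Matrix.of fun a b => X (p, a) (q, b))).trace) *ᵥ x
        = Y.trace - (Γ Y).trace := by
      have hYtr : Y.trace = ∑ p : Fin k, ∑ q : Fin k,
          (star (x p) * x q) * (Matrix.of fun a b => X (p, a) (q, b)).trace := by
        simp only [hYdef, Matrix.trace_sum, Matrix.trace_smul, smul_eq_mul]
      have hGYtr : (Γ Y).trace = ∑ p : Fin k, ∑ q : Fin k,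
          (star (x p) * x q) * (Γ (Matrix.of fun a b => X (p, a) (q, b))).trace := by
        simp only [hYdef, map_sum, _root_.map_smul, Matrix.trace_sum, Matrix.trace_smul,
          smul_eq_mul]
      rw [hYtr, hGYtr, dotProduct, ← Finset.sum_sub_distrib]
      refine Finset.sum_congr rfl fun p _ => ?_
      simp only [Matrix.mulVec, dotProduct, Matrix.of_apply, Pi.star_apply,
        Finset.mul_sum, ← Finset.sum_sub_distrib]
      refine Finset.sum_congr rfl fun q _ => ?_
      ring
    rw [hform]
    exact trace_mono_sub hCP hTr hYpsd

end Aux2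

section Aux3
variable {ιA ιB : Type*} [Fintype ιA] [Fintype ιB] [DecidableEq ιA] [DecidableEq ιB]

theorem kron_one_psd {k m : Type*} [Fintype k] [Fintype m] [DecidableEq m]
    {B : Matrix k k ℂ} (hB : B.PosSemidef) :
    (Matrix.of fun p q : k × m => B p.1 q.1 * (1 : Matrix m m ℂ) p.2 q.2).PosSemidef := by
  refine Matrix.PosSemidef.of_dotProduct_mulVec_nonneg ?_ ?_
  · ext p q
    simp only [Matrix.conjTranspose_apply, Matrix.of_apply, star_mul', Matrix.one_apply,
      apply_ite (star : ℂ → ℂ), star_one, star_zero]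
    rw [← hB.1.apply p.1 q.1]
    by_cases h : q.2 = p.2
    · simp [h, eq_comm]
    · simp [h, Ne.symm h]
  · intro w
    have : star w ⬝ᵥ (Matrix.of fun p q : k × m => B p.1 q.1 * (1 : Matrix m m ℂ) p.2 q.2) *ᵥ w
        = ∑ i : m, star (fun p => w (p, i)) ⬝ᵥ B *ᵥ (fun p => w (p, i)) := by
      simp only [dotProduct, Matrix.mulVec, Matrix.of_apply, Pi.star_apply,
        Fintype.sum_prod_type, Matrix.one_apply, mul_ite, mul_one, mul_zero,
        Finset.sum_ite_eq', Finset.mem_univ, if_true, Finset.mul_sum]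
      rw [Finset.sum_comm]
      refine Finset.sum_congr rfl fun i _ => Finset.sum_congr rfl fun p _ => ?_
      simp only [dotProduct, Matrix.mulVec, Pi.star_apply, mul_ite, mul_zero,
        ite_mul, zero_mul, Finset.sum_ite_eq, Finset.mem_univ, if_true, Finset.mul_sum]
    rw [this]
    exact Finset.sum_nonneg fun i _ => hB.dotProduct_mulVec_nonneg _

/-- The correction map `X ↦ (Tr X - Tr (Γ X)) • (dB⁻¹ • 1)`. -/
noncomputable def Xi (Γ : Matrix ιA ιA ℂ →ₗ[ℂ] Matrix ιB ιB ℂ) :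
    Matrix ιA ιA ℂ →ₗ[ℂ] Matrix ιB ιB ℂ :=
  (Matrix.traceLinearMap ιA ℂ ℂ - (Matrix.traceLinearMap ιB ℂ ℂ).comp Γ).smulRight
    ((((Fintype.card ιB : ℝ)⁻¹ : ℝ) : ℂ) • (1 : Matrix ιB ιB ℂ))

theorem Xi_apply (Γ : Matrix ιA ιA ℂ →ₗ[ℂ] Matrix ιB ιB ℂ) (X : Matrix ιA ιA ℂ) :
    Xi Γ X = (X.trace - (Γ X).trace) • ((((Fintype.card ιB : ℝ)⁻¹ : ℝ) : ℂ)
      • (1 : Matrix ιB ιB ℂ)) := rfl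

theorem idTensor_Xi_apply (Γ : Matrix ιA ιA ℂ →ₗ[ℂ] Matrix ιB ιB ℂ) (k : ℕ)
    (X : Matrix (Fin k × ιA) (Fin k × ιA) ℂ) :
    (idTensor (Fin k) (Xi Γ)) X = ((((Fintype.card ιB : ℝ)⁻¹ : ℝ) : ℂ)) •
      Matrix.of fun p q : Fin k × ιB =>
        ((Matrix.of fun a b => X (p.1, a) (q.1, b)).trace
          - (Γ (Matrix.of fun a b => X (p.1, a) (q.1, b))).trace)
          * (1 : Matrix ιB ιB ℂ) p.2 q.2 := by
  ext p q
  simp only [idTensor, LinearMap.coe_mk, AddHom.coe_mk, Matrix.of_apply, Xi_apply,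
    Matrix.smul_apply, Matrix.one_apply, smul_eq_mul]
  ring

theorem ptranspose_idTensor_Xi (Γ : Matrix ιA ιA ℂ →ₗ[ℂ] Matrix ιB ιB ℂ) (k : ℕ)
    (X : Matrix (Fin k × ιA) (Fin k × ιA) ℂ) :
    ptranspose ((idTensor (Fin k) (Xi Γ)) X) = (idTensor (Fin k) (Xi Γ)) X := by
  ext p q
  show ((idTensor (Fin k) (Xi Γ)) X) (p.1, q.2) (q.1, p.2) = _
  simp only [idTensor_Xi_apply, Matrix.smul_apply, Matrix.of_apply, Matrix.one_apply,
    smul_eq_mul]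
  by_cases h : p.2 = q.2
  · simp [h]
  · simp [h, Ne.symm h]

/-- `idTensor` of `Xi Γ` yields PPT outputs on PSD inputs. -/
theorem Xi_ppt {Γ : Matrix ιA ιA ℂ →ₗ[ℂ] Matrix ιB ιB ℂ} (hCP : IsCP Γ)
    (hTr : ∀ ρ : Matrix ιA ιA ℂ, IsState ρ → ((Γ ρ).trace).re ≤ 1)
    (k : ℕ) {X : Matrix (Fin k × ιA) (Fin k × ιA) ℂ} (hX : X.PosSemidef) :
    IsPPT ((idTensor (Fin k) (Xi Γ)) X) := by
  have hpsd : ((idTensor (Fin k) (Xi Γ)) X).PosSemidef := by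
    rw [idTensor_Xi_apply]
    exact psd_smul_real (kron_one_psd (deficit_psd hCP hTr k hX))
      (inv_nonneg.mpr (Nat.cast_nonneg _))
  exact ⟨hpsd, by rwa [ptranspose_idTensor_Xi]⟩

end Aux3

section Aux4
variable {ιA ιB : Type*} [Fintype ιA] [Fintype ιB] [DecidableEq ιA] [DecidableEq ιB]

theorem ptranspose_add {M N : Matrix (ιA × ιB) (ιA × ιB) ℂ} :
    ptranspose (M + N) = ptranspose M + ptranspose N := rfl

theorem IsPPT.add' {M N : Matrix (ιA × ιB) (ιA × ιB) ℂ} (hM : IsPPT M) (hN : IsPPT N) :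
    IsPPT (M + N) :=
  ⟨hM.1.add hN.1, by rw [ptranspose_add]; exact hM.2.add hN.2⟩

theorem idTensor_add (R : Type*) (Φ Ψ : Matrix ιA ιA ℂ →ₗ[ℂ] Matrix ιB ιB ℂ)
    (X : Matrix (R × ιA) (R × ιA) ℂ) [Fintype R] :
    (idTensor R (Φ + Ψ)) X = (idTensor R Φ) X + (idTensor R Ψ) X := rfl

/-- completion of a PPT-binding subchannel to a PPT-binding channel -/
theorem comp_channel (hB : Fintype.card ιB ≠ 0)
    {Γ : Matrix ιA ιA ℂ →ₗ[ℂ] Matrix ιB ιB ℂ} (hΓ : PPTBindingSubchannel Γ) :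
    PPTBindingChannel (Γ + Xi Γ) := by
  obtain ⟨hCP, hTr, hPPT⟩ := hΓ
  refine ⟨⟨?_, ?_⟩, ?_⟩
  · intro k X hX
    rw [idTensor_add]
    exact ((hPPT k X hX).1).add (Xi_ppt hCP hTr k hX).1
  · intro X
    rw [LinearMap.add_apply, Matrix.trace_add, Xi_apply, Matrix.trace_smul,
      Matrix.trace_smul, Matrix.trace_one, smul_eq_mul, smul_eq_mul]
    have : (((Fintype.card ιB : ℝ)⁻¹ : ℝ) : ℂ) * (Fintype.card ιB : ℂ) = 1 := by
      rw [← Complex.ofReal_natCast, ← Complex.ofReal_mul,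
        inv_mul_cancel₀ (by exact_mod_cast hB), Complex.ofReal_one]
    rw [this, mul_one]
    ring
  · intro k X hX
    rw [idTensor_add]
    exact (hPPT k X hX).add' (Xi_ppt hCP hTr k hX)

theorem channel_to_sub {Γ : Matrix ιA ιA ℂ →ₗ[ℂ] Matrix ιB ιB ℂ}
    (h : PPTBindingChannel Γ) : PPTBindingSubchannel Γ := by
  refine ⟨h.1.1, fun ρ hρ => ?_, h.2⟩
  rw [h.1.2 ρ, hρ.2]
  norm_num

end Aux4

/-- **Subchannel formulation of the channel robustness.** For every channel
`Λ : M_{d_A}(ℂ) → M_{d_B}(ℂ)`, the robustness computed over PPT-binding subchannels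
equals the robustness computed over PPT-binding channels. -/
theorem RKE_subchannel_eq {dA dB : ℕ}
    (Λ : Matrix (Fin dA) (Fin dA) ℂ →ₗ[ℂ] Matrix (Fin dB) (Fin dB) ℂ)
    (hΛ : IsChannel Λ) :
    sInf {l : ℝ | 0 ≤ l ∧ ∃ Γ Θ : Matrix (Fin dA) (Fin dA) ℂ →ₗ[ℂ] Matrix (Fin dB) (Fin dB) ℂ,
      PPTBindingSubchannel Γ ∧ PPTBindingSubchannel Θ ∧
      Λ + (l : ℂ) • Γ = ((1 + l : ℝ) : ℂ) • Θ} = RKE Λ := by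
  have hsets : {l : ℝ | 0 ≤ l ∧ ∃ Γ Θ : Matrix (Fin dA) (Fin dA) ℂ →ₗ[ℂ]
        Matrix (Fin dB) (Fin dB) ℂ,
      PPTBindingSubchannel Γ ∧ PPTBindingSubchannel Θ ∧
      Λ + (l : ℂ) • Γ = ((1 + l : ℝ) : ℂ) • Θ}
      = {l : ℝ | 0 ≤ l ∧ ∃ Γ Θ : Matrix (Fin dA) (Fin dA) ℂ →ₗ[ℂ]
        Matrix (Fin dB) (Fin dB) ℂ,
      PPTBindingChannel Γ ∧ PPTBindingChannel Θ ∧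
      Λ + (l : ℂ) • Γ = ((1 + l : ℝ) : ℂ) • Θ} := by
    ext l
    simp only [Set.mem_setOf_eq]
    constructor
    · rintro ⟨hl, Γ, Θ, hΓ, hΘ, hEq⟩
      by_cases hB : dB = 0
      · subst hB
        by_cases hA : dA = 0
        · subst hA
          have hzero : PPTBindingChannel (0 : Matrix (Fin 0) (Fin 0) ℂ →ₗ[ℂ]
              Matrix (Fin 0) (Fin 0) ℂ) := by
            refine ⟨⟨?_, ?_⟩, ?_⟩
            · intro k X hX
              have : (idTensor (Fin k) (0 : Matrix (Fin 0) (Fin 0) ℂ →ₗ[ℂ]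
                  Matrix (Fin 0) (Fin 0) ℂ)) X = 0 := rfl
              rw [this]; exact Matrix.PosSemidef.zero
            · intro X
              rw [LinearMap.zero_apply, Matrix.trace_zero,
                Matrix.trace_eq_zero_of_isEmpty]
            · intro k X hX
              have : (idTensor (Fin k) (0 : Matrix (Fin 0) (Fin 0) ℂ →ₗ[ℂ]
                  Matrix (Fin 0) (Fin 0) ℂ)) X = 0 := rfl
              rw [this]
              exact ⟨Matrix.PosSemidef.zero, Matrix.PosSemidef.zero⟩
          refine ⟨hl, 0, 0, hzero, hzero, ?_⟩
          have hΛ0 : Λ = 0 := LinearMap.ext fun X => Matrix.ext fun i _ => i.elim0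
          rw [hΛ0]; simp
        · exfalso
          have h1 := hΛ.2 1
          rw [Matrix.trace_eq_zero_of_isEmpty, Matrix.trace_one] at h1
          rw [Fintype.card_fin] at h1
          exact hA (by exact_mod_cast h1.symm)
      · have hB' : Fintype.card (Fin dB) ≠ 0 := by simpa using hB
        refine ⟨hl, Γ + Xi Γ, Θ + Xi Θ, comp_channel hB' hΓ, comp_channel hB' hΘ, ?_⟩
        apply LinearMap.ext
        intro X
        have h1 := LinearMap.congr_fun hEq X
        simp only [LinearMap.add_apply, LinearMap.smul_apply] at h1 ⊢
        have htr := congrArg Matrix.trace h1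
        simp only [Matrix.trace_add, Matrix.trace_smul, smul_eq_mul, hΛ.2 X] at htr
        have hcoef : (l : ℂ) * (X.trace - (Γ X).trace)
            = ((1 + l : ℝ) : ℂ) * (X.trace - (Θ X).trace) := by
          push_cast at htr ⊢
          linear_combination -htr
        rw [smul_add, smul_add, ← add_assoc, h1]
        simp only [Xi_apply, smul_smul]
        congr 1
        rw [← mul_assoc, ← mul_assoc, hcoef]
    · rintro ⟨hl, Γ, Θ, hΓ, hΘ, hEq⟩
      exact ⟨hl, Γ, Θ, channel_to_sub hΓ, channel_to_sub hΘ, hEq⟩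
  rw [hsets]
  rfl
end

section
/- For every bipartite state ρ on ℂ^{d_A} ⊗ ℂ^{d_B} and every n ∈ ℕ, the tempered negativity is supermultiplicative under tensor powers: N_τ(ρ^{⊗n}) ≥ N_τ(ρ)^n, where ρ^{⊗n} is regarded as a bipartite state with respect to the A^n : B^n cut and the partial transpose is taken on all B factors. -/
set_option linter.unusedSectionVars false
set_option maxHeartbeats 1000000


open Matrix
open scoped ComplexOrder

section Defs

variable {ιA ιB : Type*}

/-- The tempered negativity `N_τ(ρ|ω)`. -/
noncomputable def temperedNegRel [Fintype ιA] [Fintype ιB] [DecidableEq ιA] [DecidableEq ιB]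
    (ρ ω : Matrix (ιA × ιB) (ιA × ιB) ℂ) : ℝ :=
  sSup {t : ℝ | ∃ X : Matrix (ιA × ιB) (ιA × ιB) ℂ, X.IsHermitian ∧
    opNorm (ptranspose X) ≤ 1 ∧ opNorm X = ((X * ω).trace).re ∧ t = ((X * ρ).trace).re}

noncomputable def temperedNeg [Fintype ιA] [Fintype ιB] [DecidableEq ιA] [DecidableEq ιB]
    (ρ : Matrix (ιA × ιB) (ιA × ιB) ℂ) : ℝ :=
  temperedNegRel ρ ρ

/-- The tempered PPT robustness `R^τ(ρ|ω)`, via `1 + 2 R^τ(ρ|ω) = sup {...}`. -/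
noncomputable def temperedRobRel [Fintype ιA] [Fintype ιB] [DecidableEq ιA] [DecidableEq ιB]
    (ρ ω : Matrix (ιA × ιB) (ιA × ιB) ℂ) : ℝ :=
  (sSup {t : ℝ | ∃ X : Matrix (ιA × ιB) (ιA × ιB) ℂ, X.IsHermitian ∧
    (∀ W : Matrix (ιA × ιB) (ιA × ιB) ℂ, IsPPT W → |((X * W).trace).re| ≤ (W.trace).re) ∧
    opNorm X = ((X * ω).trace).re ∧ t = ((X * ρ).trace).re} - 1) / 2

noncomputable def temperedRob [Fintype ιA] [Fintype ιB] [DecidableEq ιA] [DecidableEq ιB]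
    (ρ : Matrix (ιA × ιB) (ιA × ιB) ℂ) : ℝ :=
  temperedRobRel ρ ρ

/-- The channel tempered negativity. -/
noncomputable def chanTemperedNeg [Fintype ιA] [Fintype ιB] [DecidableEq ιA] [DecidableEq ιB]
    (Λ : Matrix ιA ιA ℂ →ₗ[ℂ] Matrix ιB ιB ℂ) : ℝ :=
  sSup {t : ℝ | ∃ ρ : Matrix (ιA × ιA) (ιA × ιA) ℂ, IsState ρ ∧
    t = temperedNeg ((idTensor ιA Λ) ρ)}

/-- The channel tempered robustness `R^τ(Λ'|Λ)`. -/
noncomputable def chanTemperedRobRel [Fintype ιA] [Fintype ιB] [DecidableEq ιA] [DecidableEq ιB]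
    (Λ' Λ : Matrix ιA ιA ℂ →ₗ[ℂ] Matrix ιB ιB ℂ) : ℝ :=
  sSup {t : ℝ | ∃ ρ : Matrix (ιA × ιA) (ιA × ιA) ℂ, IsState ρ ∧
    t = temperedRobRel ((idTensor ιA Λ') ρ) ((idTensor ιA Λ) ρ)}

/-- The diamond norm. -/
noncomputable def diamondNorm [Fintype ιA] [Fintype ιB] [DecidableEq ιA] [DecidableEq ιB]
    (Φ : Matrix ιA ιA ℂ →ₗ[ℂ] Matrix ιB ιB ℂ) : ℝ :=
  sSup {t : ℝ | ∃ ρ : Matrix (ιA × ιA) (ιA × ιA) ℂ, IsState ρ ∧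
    t = traceNorm ((idTensor ιA Φ) ρ)}

/-- The `n`-fold tensor power of a linear map on matrices. -/
noncomputable def tensorPow [Fintype ιA] [DecidableEq ιA] (n : ℕ)
    (Λ : Matrix ιA ιA ℂ →ₗ[ℂ] Matrix ιB ιB ℂ) :
    Matrix (Fin n → ιA) (Fin n → ιA) ℂ →ₗ[ℂ] Matrix (Fin n → ιB) (Fin n → ιB) ℂ where
  toFun M := Matrix.of fun p q => ∑ a : Fin n → ιA, ∑ b : Fin n → ιA,
      M a b * ∏ i, Λ (Matrix.single (a i) (b i) 1) (p i) (q i)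
  map_add' M N := by
    funext p q
    simp [Matrix.add_apply, add_mul, Finset.sum_add_distrib]
  map_smul' c M := by
    funext p q
    simp [Matrix.smul_apply, Finset.mul_sum, mul_assoc]

/-- The `n`-fold tensor power of a bipartite state, regarded as bipartite across the `Aⁿ:Bⁿ` cut. -/
noncomputable def statePow (n : ℕ) (ρ : Matrix (ιA × ιB) (ιA × ιB) ℂ) :
    Matrix ((Fin n → ιA) × (Fin n → ιB)) ((Fin n → ιA) × (Fin n → ιB)) ℂ :=
  Matrix.of fun p q => ∏ i, ρ (p.1 i, p.2 i) (q.1 i, q.2 i)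

/-- The Choi matrix `J_Φ = (1/d_A) ∑_{ij} |i⟩⟨j| ⊗ Φ(|i⟩⟨j|)`. -/
noncomputable def choi [Fintype ιA] [DecidableEq ιA]
    (Φ : Matrix ιA ιA ℂ →ₗ[ℂ] Matrix ιB ιB ℂ) : Matrix (ιA × ιB) (ιA × ιB) ℂ :=
  Matrix.of fun p q => (Fintype.card ιA : ℂ)⁻¹ * Φ (Matrix.single p.1 q.1 1) p.2 q.2


end Defs

section AuxSupermult

section Helpers
variable {ι κ : Type*} [Fintype ι] [DecidableEq ι] [Fintype κ] [DecidableEq κ]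

noncomputable def en (v : ι → ℂ) : ℝ :=
  ‖((WithLp.equiv 2 (ι → ℂ)).symm v : EuclideanSpace ℂ ι)‖

lemma en_eq (v : ι → ℂ) : en v = Real.sqrt (∑ i, ‖v i‖ ^ 2) := by
  rw [en, EuclideanSpace.norm_eq]; rfl

lemma en_nonneg (v : ι → ℂ) : 0 ≤ en v := norm_nonneg _

lemma en_sq (v : ι → ℂ) : en v ^ 2 = ∑ i, ‖v i‖ ^ 2 := by
  rw [en_eq, Real.sq_sqrt]; positivity

lemma en_coord_le (v : ι → ℂ) (i : ι) : ‖v i‖ ≤ en v := by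
  rw [en_eq]
  have : ‖v i‖ = Real.sqrt (‖v i‖ ^ 2) := by
    rw [Real.sqrt_sq (norm_nonneg _)]
  rw [this]
  apply Real.sqrt_le_sqrt
  exact Finset.single_le_sum (f := fun j => ‖v j‖ ^ 2) (fun j _ => by positivity) (Finset.mem_univ i)

lemma en_single (j : ι) : en (Pi.single j (1:ℂ)) = 1 := by
  rw [en_eq]
  have : (∑ i : ι, ‖(Pi.single j 1 : ι → ℂ) i‖ ^ 2) = 1 := by
    simp [Pi.single_apply, apply_ite (fun z : ℂ => ‖z‖), apply_ite (fun r : ℝ => r ^ 2)]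
  rw [this, Real.sqrt_one]

lemma en_mulVec_le (M : Matrix ι ι ℂ) (v : ι → ℂ) :
    en (M.mulVec v) ≤ opNorm M * en v := by
  have h := (Matrix.toEuclideanCLM (𝕜 := ℂ) (n := ι) M).le_opNorm
    ((WithLp.equiv 2 (ι → ℂ)).symm v)
  rwa [WithLp.equiv_symm_apply, Matrix.toEuclideanCLM_toLp] at h

lemma opNorm_le_of_forall (M : Matrix ι ι ℂ) {C : ℝ} (hC : 0 ≤ C)
    (h : ∀ v : ι → ℂ, en (M.mulVec v) ≤ C * en v) : opNorm M ≤ C := by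
  apply ContinuousLinearMap.opNorm_le_bound _ hC
  intro x
  obtain ⟨y, rfl⟩ : ∃ y, (WithLp.equiv 2 (ι → ℂ)).symm y = x :=
    ⟨WithLp.equiv 2 (ι → ℂ) x, (WithLp.equiv 2 (ι → ℂ)).symm_apply_apply x⟩
  rw [WithLp.equiv_symm_apply, Matrix.toEuclideanCLM_toLp]
  exact h y

lemma opNorm_nonneg (M : Matrix ι ι ℂ) : 0 ≤ opNorm M := norm_nonneg _

lemma entry_le_opNorm (M : Matrix ι ι ℂ) (i j : ι) : ‖M i j‖ ≤ opNorm M := by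
  have h := en_mulVec_le M (Pi.single j 1)
  rw [en_single, mul_one] at h
  have h2 := en_coord_le (M.mulVec (Pi.single j 1)) i
  rw [Matrix.mulVec_single] at h2
  simp only [MulOpposite.op_one, one_smul] at h2
  calc ‖M i j‖ ≤ en (M *ᵥ Pi.single j 1) := by rw [Matrix.mulVec_single]; simpa using h2
    _ ≤ opNorm M := h

lemma opNorm_one [Nonempty ι] : opNorm (1 : Matrix ι ι ℂ) = 1 := by
  haveI : Nontrivial (EuclideanSpace ℂ ι) := by
    obtain ⟨i⟩ := ‹Nonempty ι›
    refine ⟨(WithLp.equiv 2 (ι → ℂ)).symm (Pi.single i 1), 0, fun h => ?_⟩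
    have := congrFun (congrArg (WithLp.equiv 2 (ι → ℂ)) h) i
    simp at this
  rw [opNorm, _root_.map_one]
  exact ContinuousLinearMap.norm_id

lemma opNorm_mul_le (A B : Matrix ι ι ℂ) : opNorm (A * B) ≤ opNorm A * opNorm B := by
  rw [opNorm, _root_.map_mul]
  exact norm_mul_le _ _

lemma en_comp_equiv (e : κ ≃ ι) (v : ι → ℂ) : en (v ∘ e) = en v := by
  rw [en_eq, en_eq]
  congr 1
  exact Fintype.sum_equiv e _ _ (fun k => rfl)

lemma opNorm_reindex_le (e : ι ≃ κ) (M : Matrix ι ι ℂ) :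
    opNorm (reindex e e M) ≤ opNorm M := by
  apply opNorm_le_of_forall _ (opNorm_nonneg M)
  intro v
  have key : (reindex e e M).mulVec v = (M.mulVec (v ∘ e)) ∘ e.symm := by
    funext k
    simp only [Matrix.mulVec, Matrix.reindex_apply, Matrix.submatrix_apply, Function.comp_apply,
      dotProduct]
    exact (Fintype.sum_equiv e _ _ (fun i => by simp)).symm
  rw [key, en_comp_equiv e.symm, ← en_comp_equiv e v]
  exact en_mulVec_le M (v ∘ e)

lemma opNorm_reindex (e : ι ≃ κ) (M : Matrix ι ι ℂ) :
    opNorm (reindex e e M) = opNorm M := by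
  refine le_antisymm (opNorm_reindex_le e M) ?_
  have := opNorm_reindex_le e.symm (reindex e e M)
  simpa using this

lemma en_le_of_sq {v : ι → ℂ} {w : κ → ℂ} {C : ℝ} (hC : 0 ≤ C)
    (h : ∑ i, ‖w i‖ ^ 2 ≤ C ^ 2 * ∑ i, ‖v i‖ ^ 2) : en w ≤ C * en v := by
  rw [en_eq, en_eq]
  calc Real.sqrt (∑ i, ‖w i‖ ^ 2) ≤ Real.sqrt (C ^ 2 * ∑ i, ‖v i‖ ^ 2) := Real.sqrt_le_sqrt h
    _ = C * Real.sqrt (∑ i, ‖v i‖ ^ 2) := by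
        rw [Real.sqrt_mul (sq_nonneg C), Real.sqrt_sq hC]


end Helpers

section Kron
variable {γ δ : Type*} [Fintype γ] [DecidableEq γ] [Fintype δ] [DecidableEq δ]

def kro (M : Matrix γ γ ℂ) (N : Matrix δ δ ℂ) : Matrix (γ × δ) (γ × δ) ℂ :=
  Matrix.of fun p q => M p.1 q.1 * N p.2 q.2

lemma kro_eq_mul (M : Matrix γ γ ℂ) (N : Matrix δ δ ℂ) :
    kro M N = kro M 1 * kro (1 : Matrix γ γ ℂ) N := by
  ext ⟨i, k⟩ ⟨j, l⟩
  rw [Matrix.mul_apply]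
  rw [Fintype.sum_prod_type]
  simp [kro, Matrix.one_apply, ite_mul, mul_ite, Finset.sum_ite_eq, Finset.sum_ite_eq',
    mul_comm]

lemma opNorm_kro_one_le (M : Matrix γ γ ℂ) :
    opNorm (kro M (1 : Matrix δ δ ℂ)) ≤ opNorm M := by
  apply opNorm_le_of_forall _ (opNorm_nonneg M)
  intro v
  have key : (kro M (1 : Matrix δ δ ℂ)).mulVec v
      = fun p : γ × δ => (M.mulVec (fun j => v (j, p.2))) p.1 := by
    funext ⟨i, k⟩
    simp only [Matrix.mulVec, dotProduct, kro, Matrix.of_apply, Matrix.one_apply]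
    rw [Fintype.sum_prod_type]
    simp [mul_ite, ite_mul, Finset.sum_ite_eq, Finset.sum_ite_eq']
  rw [key]
  apply en_le_of_sq (opNorm_nonneg M)
  calc ∑ p : γ × δ, ‖(M.mulVec (fun j => v (j, p.2))) p.1‖ ^ 2
      = ∑ k : δ, ∑ i : γ, ‖(M.mulVec (fun j => v (j, k))) i‖ ^ 2 := by
        rw [Fintype.sum_prod_type]; exact Finset.sum_comm
    _ = ∑ k : δ, en (M.mulVec (fun j => v (j, k))) ^ 2 := by
        simp_rw [en_sq]
    _ ≤ ∑ k : δ, (opNorm M * en (fun j => v (j, k))) ^ 2 := by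
        apply Finset.sum_le_sum
        intro k _
        exact pow_le_pow_left₀ (en_nonneg _) (en_mulVec_le M _) 2
    _ = opNorm M ^ 2 * ∑ k : δ, ∑ j : γ, ‖v (j, k)‖ ^ 2 := by
        simp_rw [mul_pow, en_sq, Finset.mul_sum]
    _ = opNorm M ^ 2 * ∑ p : γ × δ, ‖v p‖ ^ 2 := by
        rw [Fintype.sum_prod_type]
        congr 1
        exact Finset.sum_comm

lemma opNorm_one_kro_le (N : Matrix δ δ ℂ) :
    opNorm (kro (1 : Matrix γ γ ℂ) N) ≤ opNorm N := by
  apply opNorm_le_of_forall _ (opNorm_nonneg N)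
  intro v
  have key : (kro (1 : Matrix γ γ ℂ) N).mulVec v
      = fun p : γ × δ => (N.mulVec (fun l => v (p.1, l))) p.2 := by
    funext ⟨i, k⟩
    simp only [Matrix.mulVec, dotProduct, kro, Matrix.of_apply, Matrix.one_apply]
    rw [Fintype.sum_prod_type]
    simp [mul_ite, ite_mul, Finset.sum_ite_eq, Finset.sum_ite_eq']
  rw [key]
  apply en_le_of_sq (opNorm_nonneg N)
  calc ∑ p : γ × δ, ‖(N.mulVec (fun l => v (p.1, l))) p.2‖ ^ 2
      = ∑ i : γ, ∑ k : δ, ‖(N.mulVec (fun l => v (i, l))) k‖ ^ 2 := by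
        rw [Fintype.sum_prod_type]
    _ = ∑ i : γ, en (N.mulVec (fun l => v (i, l))) ^ 2 := by
        simp_rw [en_sq]
    _ ≤ ∑ i : γ, (opNorm N * en (fun l => v (i, l))) ^ 2 := by
        apply Finset.sum_le_sum
        intro i _
        exact pow_le_pow_left₀ (en_nonneg _) (en_mulVec_le N _) 2
    _ = opNorm N ^ 2 * ∑ i : γ, ∑ l : δ, ‖v (i, l)‖ ^ 2 := by
        simp_rw [mul_pow, en_sq, Finset.mul_sum]
    _ = opNorm N ^ 2 * ∑ p : γ × δ, ‖v p‖ ^ 2 := by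
        rw [Fintype.sum_prod_type]

lemma opNorm_kro_le (M : Matrix γ γ ℂ) (N : Matrix δ δ ℂ) :
    opNorm (kro M N) ≤ opNorm M * opNorm N := by
  rw [kro_eq_mul]
  calc opNorm (kro M 1 * kro (1 : Matrix γ γ ℂ) N)
      ≤ opNorm (kro M (1 : Matrix δ δ ℂ)) * opNorm (kro (1 : Matrix γ γ ℂ) N) := opNorm_mul_le _ _
    _ ≤ opNorm M * opNorm N := by
        apply mul_le_mul (opNorm_kro_one_le M) (opNorm_one_kro_le N) (opNorm_nonneg _)
          (opNorm_nonneg M)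

end Kron

section StatePow
variable {A B : Type*} [Fintype A] [DecidableEq A] [Fintype B] [DecidableEq B]

lemma sum_prod_eq {β : Type*} [CommSemiring β] (n : ℕ) (g : Fin n → (A × B) → β) :
    ∑ P : (Fin n → A) × (Fin n → B), ∏ i, g i (P.1 i, P.2 i) = ∏ i, ∑ x : A × B, g i x := by
  rw [Finset.prod_univ_sum (fun _ => Finset.univ) g, Fintype.piFinset_univ]
  exact Fintype.sum_equiv (Equiv.arrowProdEquivProdArrow (Fin n) (fun _ => A) (fun _ => B)).symm
    (fun P => ∏ i, g i (P.1 i, P.2 i)) (fun h => ∏ i, g i (h i)) (fun P => rfl)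

lemma statePow_isHermitian {n : ℕ} {X : Matrix (A × B) (A × B) ℂ} (hX : X.IsHermitian) :
    (statePow n X).IsHermitian := by
  ext ⟨p, q⟩
  simp only [Matrix.conjTranspose_apply, statePow, Matrix.of_apply, star_prod]
  exact Finset.prod_congr rfl fun i _ => congrFun (congrFun hX _) _

lemma ptranspose_statePow (n : ℕ) (X : Matrix (A × B) (A × B) ℂ) :
    ptranspose (statePow n X) = statePow n (ptranspose X) := rfl

lemma trace_statePow (n : ℕ) (ρ : Matrix (A × B) (A × B) ℂ) :
    (statePow n ρ).trace = ρ.trace ^ n := by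
  simp only [Matrix.trace, Matrix.diag, statePow, Matrix.of_apply]
  rw [sum_prod_eq n (fun _ x => ρ x x)]
  simp [Finset.prod_const]

lemma trace_statePow_mul (n : ℕ) (X ρ : Matrix (A × B) (A × B) ℂ) :
    ((statePow n X) * (statePow n ρ)).trace = ((X * ρ).trace) ^ n := by
  have h1 : ((statePow n X) * (statePow n ρ)).trace
      = ∑ P : (Fin n → A) × (Fin n → B), ∏ i, ((X * ρ) (P.1 i, P.2 i) (P.1 i, P.2 i)) := by
    simp only [Matrix.trace, Matrix.diag, Matrix.mul_apply, statePow, Matrix.of_apply]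
    refine Finset.sum_congr rfl fun P _ => ?_
    simp_rw [← Finset.prod_mul_distrib]
    rw [sum_prod_eq n (fun i x => X (P.1 i, P.2 i) x * ρ x (P.1 i, P.2 i))]
  rw [h1, sum_prod_eq n (fun _ x => (X * ρ) x x)]
  simp [Finset.prod_const, Matrix.trace, Matrix.diag]

noncomputable def vpow (n : ℕ) (v : (A × B) → ℂ) : ((Fin n → A) × (Fin n → B)) → ℂ :=
  fun P => ∏ i, v (P.1 i, P.2 i)

lemma statePow_mulVec (n : ℕ) (X : Matrix (A × B) (A × B) ℂ) (v : (A × B) → ℂ) :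
    (statePow n X).mulVec (vpow n v) = vpow n (X.mulVec v) := by
  funext P
  simp only [Matrix.mulVec, dotProduct, statePow, Matrix.of_apply, vpow]
  simp_rw [← Finset.prod_mul_distrib]
  rw [sum_prod_eq n (fun i x => X (P.1 i, P.2 i) x * v x)]

lemma en_vpow (n : ℕ) (v : (A × B) → ℂ) : en (vpow n v) = en v ^ n := by
  have h2 : en (vpow n v) ^ 2 = (en v ^ n) ^ 2 := by
    rw [en_sq]
    have : ∀ P : (Fin n → A) × (Fin n → B), ‖vpow n v P‖ ^ 2 = ∏ i, ‖v (P.1 i, P.2 i)‖ ^ 2 := by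
      intro P
      rw [vpow, norm_prod, Finset.prod_pow]
    simp_rw [this]
    rw [sum_prod_eq n (fun _ x => ‖v x‖ ^ 2)]
    rw [Finset.prod_const, Finset.card_univ, Fintype.card_fin, ← en_sq]
    ring
  calc en (vpow n v) = Real.sqrt (en (vpow n v) ^ 2) := (Real.sqrt_sq (en_nonneg _)).symm
    _ = Real.sqrt ((en v ^ n) ^ 2) := by rw [h2]
    _ = en v ^ n := Real.sqrt_sq (pow_nonneg (en_nonneg _) _)

lemma statePow_zero (X : Matrix (A × B) (A × B) ℂ) : statePow 0 X = 1 := by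
  ext P Q
  rw [Subsingleton.elim P Q]
  simp [statePow, Matrix.one_apply]

def consEquiv (A B : Type*) (n : ℕ) :
    ((A × B) × ((Fin n → A) × (Fin n → B))) ≃ ((Fin (n+1) → A) × (Fin (n+1) → B)) where
  toFun x := (Fin.cons x.1.1 x.2.1, Fin.cons x.1.2 x.2.2)
  invFun y := ((y.1 0, y.2 0), (Fin.tail y.1, Fin.tail y.2))
  left_inv := by
    rintro ⟨⟨a, b⟩, ⟨p, q⟩⟩
    simp [Fin.tail_cons]
  right_inv := by
    rintro ⟨p, q⟩
    simp [Fin.cons_self_tail]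

lemma statePow_succ (n : ℕ) (X : Matrix (A × B) (A × B) ℂ) :
    statePow (n+1) X = reindex (consEquiv A B n) (consEquiv A B n) (kro X (statePow n X)) := by
  ext P Q
  simp only [Matrix.reindex_apply, Matrix.submatrix_apply, kro, statePow, Matrix.of_apply,
    consEquiv, Equiv.coe_fn_symm_mk]
  rw [Fin.prod_univ_succ]
  rfl

lemma opNorm_statePow_le (n : ℕ) (X : Matrix (A × B) (A × B) ℂ) :
    opNorm (statePow n X) ≤ opNorm X ^ n := by
  induction n with
  | zero => rw [statePow_zero, pow_zero, opNorm_one]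
  | succ n ih =>
    rw [statePow_succ, opNorm_reindex, pow_succ, mul_comm (opNorm X ^ n)]
    calc opNorm (kro X (statePow n X)) ≤ opNorm X * opNorm (statePow n X) := opNorm_kro_le _ _
      _ ≤ opNorm X * opNorm X ^ n := by
          exact mul_le_mul_of_nonneg_left ih (opNorm_nonneg X)

lemma opNorm_statePow (n : ℕ) (X : Matrix (A × B) (A × B) ℂ) :
    opNorm (statePow n X) = opNorm X ^ n := by
  refine le_antisymm (opNorm_statePow_le n X) ?_
  rcases Nat.eq_zero_or_pos n with hn | hn
  · subst hn
    rw [statePow_zero, pow_zero, opNorm_one]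
  set c := opNorm (statePow n X) with hc
  have hc0 : 0 ≤ c := opNorm_nonneg _
  have key : ∀ v : (A × B) → ℂ, en (X.mulVec v) ^ n ≤ c * en v ^ n := by
    intro v
    have := en_mulVec_le (statePow n X) (vpow n v)
    rwa [statePow_mulVec, en_vpow, en_vpow] at this
  have hroot : opNorm X ≤ c ^ ((n : ℝ)⁻¹) := by
    apply opNorm_le_of_forall _ (Real.rpow_nonneg hc0 _)
    intro v
    have h1 : en (X.mulVec v) ^ n ≤ (c ^ ((n : ℝ)⁻¹) * en v) ^ n := by
      rw [mul_pow]
      have : (c ^ ((n : ℝ)⁻¹)) ^ n = c := by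
        rw [← Real.rpow_natCast (c ^ ((n : ℝ)⁻¹)) n, ← Real.rpow_mul hc0,
          inv_mul_cancel₀ (by exact_mod_cast hn.ne'), Real.rpow_one]
      rw [this]
      exact key v
    exact (pow_le_pow_iff_left₀ (en_nonneg _)
      (mul_nonneg (Real.rpow_nonneg hc0 _) (en_nonneg _)) hn.ne').mp h1
  calc opNorm X ^ n ≤ (c ^ ((n : ℝ)⁻¹)) ^ n := pow_le_pow_left₀ (opNorm_nonneg X) hroot n
    _ = c := by
        rw [← Real.rpow_natCast (c ^ ((n : ℝ)⁻¹)) n, ← Real.rpow_mul hc0,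
          inv_mul_cancel₀ (by exact_mod_cast hn.ne'), Real.rpow_one]

end StatePow

section Neg
variable {A B : Type*} [Fintype A] [DecidableEq A] [Fintype B] [DecidableEq B]

def negSet (ρ ω : Matrix (A × B) (A × B) ℂ) : Set ℝ :=
  {t : ℝ | ∃ X : Matrix (A × B) (A × B) ℂ, X.IsHermitian ∧
    opNorm (ptranspose X) ≤ 1 ∧ opNorm X = ((X * ω).trace).re ∧ t = ((X * ρ).trace).re}

lemma temperedNegRel_eq (ρ ω : Matrix (A × B) (A × B) ℂ) :
    temperedNegRel ρ ω = sSup (negSet ρ ω) := rfl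

def swapE (A B : Type*) : ((A × B) × (A × B)) ≃ ((A × B) × (A × B)) where
  toFun z := ((z.1.1, z.2.2), (z.2.1, z.1.2))
  invFun z := ((z.1.1, z.2.2), (z.2.1, z.1.2))
  left_inv := by rintro ⟨⟨a, b⟩, ⟨c, d⟩⟩; rfl
  right_inv := by rintro ⟨⟨a, b⟩, ⟨c, d⟩⟩; rfl

lemma trace_ptranspose_mul (X M : Matrix (A × B) (A × B) ℂ) :
    (ptranspose X * ptranspose M).trace = (X * M).trace := by
  have expand : ∀ Y N : Matrix (A × B) (A × B) ℂ,
      (Y * N).trace = ∑ z : (A × B) × (A × B), Y z.1 z.2 * N z.2 z.1 := by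
    intro Y N
    simp only [Matrix.trace, Matrix.diag, Matrix.mul_apply]
    exact (Fintype.sum_prod_type (f := fun z : (A × B) × (A × B) => Y z.1 z.2 * N z.2 z.1)).symm
  rw [expand, expand]
  exact Fintype.sum_equiv (swapE A B) _ _ (by rintro ⟨⟨a, b⟩, ⟨c, d⟩⟩; rfl)

lemma bddAbove_negSet (ρ ω : Matrix (A × B) (A × B) ℂ) : BddAbove (negSet ρ ω) := by
  refine ⟨∑ z : (A × B) × (A × B), ‖ptranspose ρ z.2 z.1‖, ?_⟩
  rintro t ⟨X, hH, hΓ, hEq, rfl⟩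
  have h1 : (X * ρ).trace = (ptranspose X * ptranspose ρ).trace :=
    (trace_ptranspose_mul X ρ).symm
  have h2 : ((X * ρ).trace).re ≤ ‖(ptranspose X * ptranspose ρ).trace‖ := by
    rw [h1]
    exact Complex.re_le_norm _
  refine h2.trans ?_
  have expand : (ptranspose X * ptranspose ρ).trace
      = ∑ z : (A × B) × (A × B), ptranspose X z.1 z.2 * ptranspose ρ z.2 z.1 := by
    simp only [Matrix.trace, Matrix.diag, Matrix.mul_apply]
    exact (Fintype.sum_prod_type
      (f := fun z : (A × B) × (A × B) => ptranspose X z.1 z.2 * ptranspose ρ z.2 z.1)).symm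
  rw [expand]
  refine (norm_sum_le _ _).trans ?_
  apply Finset.sum_le_sum
  intro z _
  rw [norm_mul]
  calc ‖ptranspose X z.1 z.2‖ * ‖ptranspose ρ z.2 z.1‖
      ≤ 1 * ‖ptranspose ρ z.2 z.1‖ := by
        apply mul_le_mul_of_nonneg_right _ (norm_nonneg _)
        exact (entry_le_opNorm _ _ _).trans hΓ
    _ = ‖ptranspose ρ z.2 z.1‖ := one_mul _

lemma ptranspose_one : ptranspose (1 : Matrix (A × B) (A × B) ℂ) = 1 := by
  ext ⟨p1, p2⟩ ⟨q1, q2⟩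
  by_cases h1 : p1 = q1 <;> by_cases h2 : p2 = q2 <;>
    simp [ptranspose, Matrix.one_apply, Prod.ext_iff, h1, h2, eq_comm]

lemma one_mem_negSet [Nonempty (A × B)] {ρ ω : Matrix (A × B) (A × B) ℂ}
    (hρ : ρ.trace = 1) (hω : ω.trace = 1) : (1 : ℝ) ∈ negSet ρ ω := by
  refine ⟨1, Matrix.isHermitian_one, ?_, ?_, ?_⟩
  · rw [ptranspose_one, opNorm_one]
  · rw [opNorm_one, Matrix.one_mul, hω, Complex.one_re]
  · rw [Matrix.one_mul, hρ, Complex.one_re]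

lemma trace_mul_real {X ρ : Matrix (A × B) (A × B) ℂ} (hX : X.IsHermitian)
    (hρ : ρ.IsHermitian) : (X * ρ).trace = (((X * ρ).trace).re : ℂ) := by
  have hstar : star ((X * ρ).trace) = (X * ρ).trace := by
    rw [← Matrix.trace_conjTranspose, Matrix.conjTranspose_mul, hX.eq, hρ.eq,
      Matrix.trace_mul_comm]
  exact (Complex.conj_eq_iff_re.mp hstar).symm

lemma pow_mem_negSet {ρ : Matrix (A × B) (A × B) ℂ} (hρH : ρ.IsHermitian) {t : ℝ}
    (ht : t ∈ negSet ρ ρ) (n : ℕ) : t ^ n ∈ negSet (statePow n ρ) (statePow n ρ) := by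
  obtain ⟨X, hH, hΓ, hEq, rfl⟩ := ht
  have htr : (X * ρ).trace = ((((X * ρ).trace).re : ℝ) : ℂ) := trace_mul_real hH hρH
  have htrpow : ((statePow n X) * (statePow n ρ)).trace = ((((X * ρ).trace).re ^ n : ℝ) : ℂ) := by
    rw [trace_statePow_mul, htr, Complex.ofReal_pow, Complex.ofReal_re]
  refine ⟨statePow n X, statePow_isHermitian hH, ?_, ?_, ?_⟩
  · rw [ptranspose_statePow, opNorm_statePow]
    exact pow_le_one₀ (opNorm_nonneg _) hΓ
  · rw [opNorm_statePow, htrpow, hEq, Complex.ofReal_re]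
  · rw [htrpow, Complex.ofReal_re]

end Neg


end AuxSupermult


/-- **Supermultiplicativity of the tempered negativity under tensor powers:**
`N_τ(ρ^{⊗n}) ≥ N_τ(ρ)^n` for every bipartite state `ρ`, where `ρ^{⊗n}` is regarded as
bipartite with respect to the `Aⁿ:Bⁿ` cut. -/
theorem temperedNeg_statePow_supermultiplicative {dA dB : ℕ}
    (ρ : Matrix (Fin dA × Fin dB) (Fin dA × Fin dB) ℂ) (hρ : IsState ρ) (n : ℕ) :
    temperedNeg (statePow n ρ) ≥ (temperedNeg ρ) ^ n := by
  have hne : Nonempty (Fin dA × Fin dB) := by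
    by_contra h
    rw [not_nonempty_iff] at h
    have h0 : ρ.trace = 0 := by simp [Matrix.trace]
    rw [hρ.2] at h0
    exact one_ne_zero h0
  haveI := hne
  haveI : Nonempty (Fin dA) := hne.map Prod.fst
  haveI : Nonempty (Fin dB) := hne.map Prod.snd
  have hρH : ρ.IsHermitian := hρ.1.1
  -- the n-fold set
  have h1Sn : (1 : ℝ) ∈ negSet (statePow n ρ) (statePow n ρ) := by
    have htr : (statePow n ρ).trace = 1 := by rw [trace_statePow, hρ.2, one_pow]
    exact one_mem_negSet htr htr
  have bddn := bddAbove_negSet (statePow n ρ) (statePow n ρ)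
  have hcn : (1 : ℝ) ≤ sSup (negSet (statePow n ρ) (statePow n ρ)) := le_csSup bddn h1Sn
  have hc0 : (0 : ℝ) ≤ sSup (negSet (statePow n ρ) (statePow n ρ)) := zero_le_one.trans hcn
  set c := sSup (negSet (statePow n ρ) (statePow n ρ)) with hc
  show c ≥ (sSup (negSet ρ ρ)) ^ n
  rcases Nat.eq_zero_or_pos n with hn | hn
  · subst hn
    rw [pow_zero]
    exact hcn
  have h1S1 : (1 : ℝ) ∈ negSet ρ ρ := one_mem_negSet hρ.2 hρ.2
  have bdd1 := bddAbove_negSet ρ ρ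
  have hs1 : (1 : ℝ) ≤ sSup (negSet ρ ρ) := le_csSup bdd1 h1S1
  have hroot : sSup (negSet ρ ρ) ≤ c ^ ((n : ℝ)⁻¹) := by
    apply csSup_le ⟨1, h1S1⟩
    intro t ht
    rcases le_or_gt t 0 with htn | htp
    · exact htn.trans (Real.rpow_nonneg hc0 _)
    · have htc : t ^ n ≤ c := le_csSup bddn (pow_mem_negSet hρH ht n)
      have : t = ((t ^ n : ℝ)) ^ ((n : ℝ)⁻¹) := by
        rw [← Real.rpow_natCast t n, ← Real.rpow_mul htp.le,
          mul_inv_cancel₀ (by exact_mod_cast hn.ne'), Real.rpow_one]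
      rw [this]
      exact Real.rpow_le_rpow (pow_nonneg htp.le _) htc (by positivity)
  have hfin : (sSup (negSet ρ ρ)) ^ n ≤ (c ^ ((n : ℝ)⁻¹)) ^ n :=
    pow_le_pow_left₀ (zero_le_one.trans hs1) hroot n
  refine hfin.trans_eq ?_
  rw [← Real.rpow_natCast (c ^ ((n : ℝ)⁻¹)) n, ← Real.rpow_mul hc0,
    inv_mul_cancel₀ (by exact_mod_cast hn.ne'), Real.rpow_one]
end
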